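/- Let A ∈ ℝ^{n×d} have singular values λ1 ≥ … ≥ λ_d > 0, let b ∈ ℝ^n, and let n, B be positive integers, γ > 0, δ ≥ 0. Define F(x) := −γ((1/n)Aᵀ(Ax − b) + δx) and, for ρ ∈ ℝ, Φ_ρ(x) := (1 + ‖x‖²)·[2⟨x, F(x)⟩ + (γ²/(n²B))‖Ax − b‖²·tr(AᵀA)] − (2 − ρ)·(γ²/(n²B))‖Ax − b‖²·⟨x, AᵀAx⟩. Then lim sup_{‖x‖→∞} Φ_ρ(x)/‖x‖⁴ = −(γ²/(n²B))·inf_{m ∈ [λ_d², λ1²]} q(m, ρ), where q(m, ρ) := 2nB(m + nδ)/γ − (Σ_{i=1}^d λ_i²)·m + (2 − ρ)m². -/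
import Mathlib


open Finset Matrix Filter

/-- Drift `F(x) = −γ((1/n)Aᵀ(Ax − b) + δx)` of homogenized SGD for ridge regression. -/
noncomputable def hsgdDrift (n d : ℕ) (γ δ : ℝ) (A : Matrix (Fin n) (Fin d) ℝ)
    (b : Fin n → ℝ) (x : Fin d → ℝ) : Fin d → ℝ :=
  (-γ) • ((n : ℝ)⁻¹ • (Aᵀ *ᵥ (A *ᵥ x - b)) + δ • x)

/-- `Φ_ρ(x) = (1 + ‖x‖²)[2⟨x, F(x)⟩ + (γ²/(n²B))‖Ax − b‖² tr(AᵀA)]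
              − (2 − ρ)(γ²/(n²B))‖Ax − b‖² ⟨x, AᵀAx⟩`. -/
noncomputable def hsgdPhi (n d B : ℕ) (γ δ ρ : ℝ) (A : Matrix (Fin n) (Fin d) ℝ)
    (b : Fin n → ℝ) (x : Fin d → ℝ) : ℝ :=
  (1 + x ⬝ᵥ x) *
      (2 * (x ⬝ᵥ hsgdDrift n d γ δ A b x) +
        γ ^ 2 / (n ^ 2 * B) * ((A *ᵥ x - b) ⬝ᵥ (A *ᵥ x - b)) * (Aᵀ * A).trace) -
    (2 - ρ) * (γ ^ 2 / (n ^ 2 * B)) * ((A *ᵥ x - b) ⬝ᵥ (A *ᵥ x - b)) *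
      (x ⬝ᵥ ((Aᵀ * A) *ᵥ x))

/-- The auxiliary quadratic `q(m, ρ) = 2nB(m + nδ)/γ − T·m + (2 − ρ)m²`,
where `T = Σ_{i=1}^d λ_i²`. -/
noncomputable def qAux (n B : ℕ) (γ δ T m ρ : ℝ) : ℝ :=
  2 * n * B * (m + n * δ) / γ - T * m + (2 - ρ) * m ^ 2

section helpers
variable {n d : ℕ}

lemma dot_tmul (A : Matrix (Fin n) (Fin d) ℝ) (x : Fin d → ℝ) (z : Fin n → ℝ) :
    x ⬝ᵥ (Aᵀ *ᵥ z) = (A *ᵥ x) ⬝ᵥ z := by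
  rw [Matrix.dotProduct_mulVec, Matrix.vecMul_transpose]

lemma dot_self_nonneg (x : Fin d → ℝ) : (0:ℝ) ≤ x ⬝ᵥ x :=
  Finset.sum_nonneg fun i _ => mul_self_nonneg _

lemma abs_dot_le (v w : Fin d → ℝ) :
    |v ⬝ᵥ w| ≤ Real.sqrt (v ⬝ᵥ v) * Real.sqrt (w ⬝ᵥ w) := by
  have h1 : (v ⬝ᵥ w) ^ 2 ≤ (v ⬝ᵥ v) * (w ⬝ᵥ w) := by
    have := Finset.sum_mul_sq_le_sq_mul_sq Finset.univ v w
    simpa [dotProduct, sq, Finset.mul_sum, mul_comm, mul_assoc, mul_left_comm] using this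
  calc |v ⬝ᵥ w| = Real.sqrt ((v ⬝ᵥ w) ^ 2) := (Real.sqrt_sq_eq_abs _).symm
    _ ≤ Real.sqrt ((v ⬝ᵥ v) * (w ⬝ᵥ w)) := Real.sqrt_le_sqrt h1
    _ = Real.sqrt (v ⬝ᵥ v) * Real.sqrt (w ⬝ᵥ w) := Real.sqrt_mul (dot_self_nonneg v) _

lemma resid_dot (A : Matrix (Fin n) (Fin d) ℝ) (b : Fin n → ℝ) (x : Fin d → ℝ) :
    (A *ᵥ x - b) ⬝ᵥ (A *ᵥ x - b)
      = x ⬝ᵥ ((Aᵀ * A) *ᵥ x) - 2 * (x ⬝ᵥ (Aᵀ *ᵥ b)) + b ⬝ᵥ b := by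
  have h1 : x ⬝ᵥ ((Aᵀ * A) *ᵥ x) = (A *ᵥ x) ⬝ᵥ (A *ᵥ x) := by
    rw [← Matrix.mulVec_mulVec, dot_tmul]
  have h2 : x ⬝ᵥ (Aᵀ *ᵥ b) = (A *ᵥ x) ⬝ᵥ b := dot_tmul A x b
  rw [dotProduct_sub, sub_dotProduct, sub_dotProduct, h1, h2,
    dotProduct_comm b (A *ᵥ x)]
  ring

lemma drift_dot (γ δ : ℝ) (A : Matrix (Fin n) (Fin d) ℝ) (b : Fin n → ℝ) (x : Fin d → ℝ) :
    x ⬝ᵥ hsgdDrift n d γ δ A b x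
      = -γ * ((x ⬝ᵥ ((Aᵀ * A) *ᵥ x) - x ⬝ᵥ (Aᵀ *ᵥ b)) / n + δ * (x ⬝ᵥ x)) := by
  have h1 : x ⬝ᵥ ((Aᵀ * A) *ᵥ x) = x ⬝ᵥ (Aᵀ *ᵥ (A *ᵥ x)) := by
    rw [← Matrix.mulVec_mulVec]
  unfold hsgdDrift
  rw [dotProduct_smul, dotProduct_add, dotProduct_smul,
    dotProduct_smul, Matrix.mulVec_sub, dotProduct_sub, h1]
  simp only [smul_eq_mul]
  ring

lemma phi_eq (n d B : ℕ) (γ δ ρ : ℝ) (A : Matrix (Fin n) (Fin d) ℝ) (b : Fin n → ℝ)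
    (x : Fin d → ℝ) :
    hsgdPhi n d B γ δ ρ A b x =
      (1 + x ⬝ᵥ x) *
        (-2*γ*((x ⬝ᵥ ((Aᵀ*A) *ᵥ x) - x ⬝ᵥ (Aᵀ *ᵥ b))/n + δ*(x ⬝ᵥ x)) +
          γ^2/(n^2*B) * (x ⬝ᵥ ((Aᵀ*A) *ᵥ x) - 2*(x ⬝ᵥ (Aᵀ *ᵥ b)) + b ⬝ᵥ b) * (Aᵀ*A).trace) -
      (2-ρ) * (γ^2/(n^2*B)) * (x ⬝ᵥ ((Aᵀ*A) *ᵥ x) - 2*(x ⬝ᵥ (Aᵀ *ᵥ b)) + b ⬝ᵥ b) *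
        (x ⬝ᵥ ((Aᵀ*A) *ᵥ x)) := by
  unfold hsgdPhi
  rw [resid_dot, drift_dot]
  ring

end helpers

section spectral
variable {d : ℕ}

lemma dot_tmul' (A : Matrix (Fin d) (Fin d) ℝ) (x z : Fin d → ℝ) :
    x ⬝ᵥ (Aᵀ *ᵥ z) = (A *ᵥ x) ⬝ᵥ z := by
  rw [Matrix.dotProduct_mulVec, Matrix.vecMul_transpose]

lemma dot_Q (Q : Matrix (Fin d) (Fin d) ℝ) (x z : Fin d → ℝ) :
    x ⬝ᵥ (Q *ᵥ z) = (Qᵀ *ᵥ x) ⬝ᵥ z := by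
  have := dot_tmul' Qᵀ x z
  rwa [Matrix.transpose_transpose] at this

lemma quad_eq (Q : Matrix (Fin d) (Fin d) ℝ) (f : Fin d → ℝ) (x : Fin d → ℝ) :
    x ⬝ᵥ ((Q * Matrix.diagonal f * Qᵀ) *ᵥ x)
      = ∑ i, f i * ((Qᵀ *ᵥ x) i) ^ 2 := by
  rw [← Matrix.mulVec_mulVec, ← Matrix.mulVec_mulVec, dot_Q]
  simp only [dotProduct, Matrix.mulVec_diagonal]
  exact Finset.sum_congr rfl fun i _ => by ring

lemma ysq (Q : Matrix (Fin d) (Fin d) ℝ) (hQ1 : Q * Qᵀ = 1) (x : Fin d → ℝ) :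
    ∑ i, ((Qᵀ *ᵥ x) i) ^ 2 = x ⬝ᵥ x := by
  have h : (Qᵀ *ᵥ x) ⬝ᵥ (Qᵀ *ᵥ x) = x ⬝ᵥ x := by
    rw [← dot_Q, Matrix.mulVec_mulVec, hQ1, Matrix.one_mulVec]
  simpa [dotProduct, sq] using h

lemma quad_bounds (Q : Matrix (Fin d) (Fin d) ℝ) (hQ1 : Q * Qᵀ = 1) (f : Fin d → ℝ)
    (lo hi : ℝ) (hlo : ∀ i, lo ≤ f i) (hhi : ∀ i, f i ≤ hi) (x : Fin d → ℝ) :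
    lo * (x ⬝ᵥ x) ≤ x ⬝ᵥ ((Q * Matrix.diagonal f * Qᵀ) *ᵥ x) ∧
      x ⬝ᵥ ((Q * Matrix.diagonal f * Qᵀ) *ᵥ x) ≤ hi * (x ⬝ᵥ x) := by
  rw [quad_eq, ← ysq Q hQ1 x]
  constructor
  · rw [Finset.mul_sum]
    exact Finset.sum_le_sum fun i _ => mul_le_mul_of_nonneg_right (hlo i) (sq_nonneg _)
  · rw [Finset.mul_sum]
    exact Finset.sum_le_sum fun i _ => mul_le_mul_of_nonneg_right (hhi i) (sq_nonneg _)

lemma exists_unit (Q : Matrix (Fin d) (Fin d) ℝ) (hQ1 : Q * Qᵀ = 1) (hQ2 : Qᵀ * Q = 1)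
    (f : Fin d → ℝ) (i0 i1 : Fin d) (m : ℝ) (hm : m ∈ Set.Icc (f i1) (f i0)) :
    ∃ u : Fin d → ℝ, u ⬝ᵥ u = 1 ∧ u ⬝ᵥ ((Q * Matrix.diagonal f * Qᵀ) *ᵥ u) = m := by
  obtain ⟨hm1, hm2⟩ := hm
  have hy : ∀ w : Fin d → ℝ, Qᵀ *ᵥ (Q *ᵥ w) = w := fun w => by
    rw [Matrix.mulVec_mulVec, hQ2, Matrix.one_mulVec]
  have key1 : ∀ w : Fin d → ℝ, (Q *ᵥ w) ⬝ᵥ (Q *ᵥ w) = w ⬝ᵥ w := fun w => by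
    rw [dot_Q, hy]
  have key2 : ∀ w : Fin d → ℝ,
      (Q *ᵥ w) ⬝ᵥ ((Q * Matrix.diagonal f * Qᵀ) *ᵥ (Q *ᵥ w))
        = w ⬝ᵥ (Matrix.diagonal f *ᵥ w) := by
    intro w
    have hmv : (Q * Matrix.diagonal f * Qᵀ) *ᵥ (Q *ᵥ w) = Q *ᵥ (Matrix.diagonal f *ᵥ w) := by
      rw [Matrix.mulVec_mulVec, mul_assoc, mul_assoc, hQ2, mul_one, ← Matrix.mulVec_mulVec]
    rw [hmv, dot_Q, hy]
  by_cases hfe : f i0 ≤ f i1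
  · have hmm : m = f i1 := le_antisymm (le_trans hm2 hfe) hm1
    refine ⟨Q *ᵥ Pi.single i1 1, ?_, ?_⟩
    · rw [key1]; simp [dotProduct_single]
    · rw [key2, Matrix.diagonal_mulVec_single, dotProduct_single, hmm]
      simp
  · push_neg at hfe
    have hne : i0 ≠ i1 := by rintro rfl; exact lt_irrefl _ hfe
    set t : ℝ := (m - f i1) / (f i0 - f i1) with ht
    have hden : 0 < f i0 - f i1 := by linarith
    have ht0 : 0 ≤ t := div_nonneg (by linarith) hden.le
    have ht1 : t ≤ 1 := by
      rw [ht, div_le_one hden]; linarith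
    set w : Fin d → ℝ :=
      Real.sqrt t • (Pi.single i0 1 : Fin d → ℝ)
        + Real.sqrt (1 - t) • (Pi.single i1 1 : Fin d → ℝ) with hw
    have hts : Real.sqrt t * Real.sqrt t = t := Real.mul_self_sqrt ht0
    have h1ts : Real.sqrt (1 - t) * Real.sqrt (1 - t) = 1 - t :=
      Real.mul_self_sqrt (by linarith)
    have hww : w ⬝ᵥ w = 1 := by
      simp only [hw, add_dotProduct, dotProduct_add, smul_dotProduct,
        dotProduct_smul, dotProduct_single, single_dotProduct,
        Pi.add_apply, Pi.smul_apply, smul_eq_mul, Pi.single_eq_same, Pi.single_eq_of_ne hne,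
        Pi.single_eq_of_ne (Ne.symm hne), mul_one, mul_zero, add_zero, zero_add]
      nlinarith [hts, h1ts]
    have hDw : w ⬝ᵥ (Matrix.diagonal f *ᵥ w) = m := by
      simp only [hw, Matrix.mulVec_add, Matrix.mulVec_smul, Matrix.diagonal_mulVec_single,
        add_dotProduct, dotProduct_add, smul_dotProduct,
        dotProduct_smul, dotProduct_single, single_dotProduct,
        Pi.add_apply, Pi.smul_apply, smul_eq_mul, Pi.single_eq_same, Pi.single_eq_of_ne hne,
        Pi.single_eq_of_ne (Ne.symm hne), mul_one, mul_zero, add_zero, zero_add]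
      have hmt : t * f i0 + (1 - t) * f i1 = m := by
        rw [ht]; field_simp; ring
      have hcalc : Real.sqrt t * (Real.sqrt t * f i0)
          + Real.sqrt (1 - t) * (Real.sqrt (1 - t) * f i1) = t * f i0 + (1 - t) * f i1 := by
        rw [← mul_assoc, ← mul_assoc, hts, h1ts]
      rw [hcalc, hmt]
    exact ⟨Q *ᵥ w, by rw [key1, hww], by rw [key2, hDw]⟩

end spectral

set_option maxHeartbeats 1000000 in
theorem limsup_Phi_eq_neg_inf_qAux (n d B : ℕ) (hn : 0 < n) (hd : 0 < d) (hB : 0 < B)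
    (γ δ : ℝ) (hγ : 0 < γ) (hδ : 0 ≤ δ)
    (A : Matrix (Fin n) (Fin d) ℝ) (b : Fin n → ℝ)
    (lam : Fin d → ℝ) (hpos : ∀ i, 0 < lam i)
    (hdec : ∀ i j : Fin d, i ≤ j → lam j ≤ lam i)
    -- `λ1 ≥ … ≥ λ_d > 0` are the singular values of `A`
    (hsvd : ∃ Q : Matrix (Fin d) (Fin d) ℝ, Q * Qᵀ = 1 ∧ Qᵀ * Q = 1 ∧
      Aᵀ * A = Q * Matrix.diagonal (fun i => lam i ^ 2) * Qᵀ) :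
    ∀ ρ : ℝ,
      limsup (fun x : Fin d → ℝ => hsgdPhi n d B γ δ ρ A b x / (x ⬝ᵥ x) ^ 2)
          (comap (fun x : Fin d → ℝ => Real.sqrt (x ⬝ᵥ x)) atTop) =
        -(γ ^ 2 / (n ^ 2 * B)) *
          sInf ((fun m => qAux n B γ δ (∑ i, lam i ^ 2) m ρ) ''
            Set.Icc ((lam ⟨d - 1, by omega⟩) ^ 2) ((lam ⟨0, hd⟩) ^ 2)) := by
  intro ρ
  obtain ⟨Q, hQ1, hQ2, hM⟩ := hsvd
  have hn' : (0:ℝ) < n := by exact_mod_cast hn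
  have hB' : (0:ℝ) < B := by exact_mod_cast hB
  obtain ⟨c0, hc0def⟩ : ∃ c : ℝ, c = γ ^ 2 / ((n:ℝ) ^ 2 * (B:ℝ)) := ⟨_, rfl⟩
  have hc0 : 0 < c0 := by rw [hc0def]; positivity
  obtain ⟨T, hTdef⟩ : ∃ t : ℝ, t = ∑ i, lam i ^ 2 := ⟨_, rfl⟩
  have hTnn : 0 ≤ T := by
    rw [hTdef]; exact Finset.sum_nonneg fun i _ => sq_nonneg _
  have htrace : (Aᵀ * A).trace = T := by
    rw [hM, Matrix.trace_mul_comm, ← mul_assoc, hQ2, one_mul, Matrix.trace_diagonal, hTdef]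
  rw [← hTdef, ← hc0def]
  set i0 : Fin d := ⟨0, hd⟩ with hi0
  set i1 : Fin d := ⟨d - 1, by omega⟩ with hi1
  set lo : ℝ := lam i1 ^ 2 with hlodef
  set hi : ℝ := lam i0 ^ 2 with hhidef
  have hlos : ∀ i : Fin d, lo ≤ lam i ^ 2 := fun i =>
    pow_le_pow_left₀ (hpos i1).le (hdec i i1 (by rw [hi1, Fin.le_def]; simp; omega)) 2
  have hhis : ∀ i : Fin d, lam i ^ 2 ≤ hi := fun i =>
    pow_le_pow_left₀ (hpos i).le (hdec i0 i (by rw [hi0, Fin.le_def]; simp)) 2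
  have hlo0 : 0 < lo := pow_pos (hpos i1) 2
  have hhi0 : (0:ℝ) ≤ hi := le_trans hlo0.le (hlos i0)
  have hlohi : lo ≤ hi := le_trans (hlos i0) (le_of_eq rfl)
  -- the quadratic q and its extrema on [lo, hi]
  have hqc : ContinuousOn (fun m => qAux n B γ δ T m ρ) (Set.Icc lo hi) := by
    unfold qAux; fun_prop
  obtain ⟨mstar, hmstar, hminS⟩ :=
    isCompact_Icc.exists_isMinOn (Set.nonempty_Icc.2 hlohi) hqc
  obtain ⟨mmax, hmmax, hmaxS⟩ :=
    isCompact_Icc.exists_isMaxOn (Set.nonempty_Icc.2 hlohi) hqc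
  have hmin : ∀ m ∈ Set.Icc lo hi, qAux n B γ δ T mstar ρ ≤ qAux n B γ δ T m ρ :=
    fun m hm => hminS hm
  have hmax : ∀ m ∈ Set.Icc lo hi, qAux n B γ δ T m ρ ≤ qAux n B γ δ T mmax ρ :=
    fun m hm => hmaxS hm
  have hsinf : sInf ((fun m => qAux n B γ δ T m ρ) '' Set.Icc lo hi)
      = qAux n B γ δ T mstar ρ := by
    apply le_antisymm
    · exact csInf_le ⟨_, by rintro y ⟨m, hm, rfl⟩; exact hmin m hm⟩ ⟨mstar, hmstar, rfl⟩
    · exact le_csInf ⟨_, mstar, hmstar, rfl⟩ (by rintro y ⟨m, hm, rfl⟩; exact hmin m hm)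
  obtain ⟨S, hSdef⟩ : ∃ sS : ℝ, sS = -c0 * qAux n B γ δ T mstar ρ := ⟨_, rfl⟩
  rw [hsinf, ← hSdef]
  set L := comap (fun x : Fin d → ℝ => Real.sqrt (x ⬝ᵥ x)) atTop with hL
  -- basic quantities
  have hquad : ∀ x : Fin d → ℝ, lo * (x ⬝ᵥ x) ≤ x ⬝ᵥ ((Aᵀ * A) *ᵥ x) ∧
      x ⬝ᵥ ((Aᵀ * A) *ᵥ x) ≤ hi * (x ⬝ᵥ x) := by
    intro x; rw [hM]
    exact quad_bounds Q hQ1 (fun i => lam i ^ 2) lo hi hlos hhis x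
  obtain ⟨K1, hK1def⟩ : ∃ k : ℝ, k = Real.sqrt ((Aᵀ *ᵥ b) ⬝ᵥ (Aᵀ *ᵥ b)) := ⟨_, rfl⟩
  have hK10 : 0 ≤ K1 := by rw [hK1def]; exact Real.sqrt_nonneg _
  have hsb : ∀ x : Fin d → ℝ, |x ⬝ᵥ (Aᵀ *ᵥ b)| ≤ K1 * Real.sqrt (x ⬝ᵥ x) := by
    intro x
    rw [hK1def, mul_comm]; exact abs_dot_le x (Aᵀ *ᵥ b)
  obtain ⟨β, hβdef⟩ : ∃ be : ℝ, be = b ⬝ᵥ b := ⟨_, rfl⟩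
  have hβ0 : 0 ≤ β := by rw [hβdef]; exact dot_self_nonneg b
  -- the constant
  obtain ⟨C, hCdef⟩ : ∃ c : ℝ, c = (2*γ/(n:ℝ)*hi + 2*γ*δ + c0*T*hi)
      + 2*(2*γ/(n:ℝ)*K1 + 2*c0*T*K1 + c0*T*β)
      + (|2 - ρ| * c0 * ((2*K1+β) * hi)) := ⟨_, rfl⟩
  have hC0 : 0 ≤ C := by
    have p1 : (0:ℝ) ≤ 2*γ/(n:ℝ)*hi := mul_nonneg (div_nonneg (by linarith) hn'.le) hhi0
    have p2 : (0:ℝ) ≤ 2*γ*δ := mul_nonneg (by linarith) hδ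
    have p3 : (0:ℝ) ≤ c0*T*hi := mul_nonneg (mul_nonneg hc0.le hTnn) hhi0
    have p4 : (0:ℝ) ≤ 2*γ/(n:ℝ)*K1 := mul_nonneg (div_nonneg (by linarith) hn'.le) hK10
    have p5 : (0:ℝ) ≤ 2*c0*T*K1 := mul_nonneg (mul_nonneg (by linarith) hTnn) hK10
    have p6 : (0:ℝ) ≤ c0*T*β := mul_nonneg (mul_nonneg hc0.le hTnn) hβ0
    have p7 : (0:ℝ) ≤ |2 - ρ| * c0 * ((2*K1+β) * hi) :=
      mul_nonneg (mul_nonneg (abs_nonneg _) hc0.le) (mul_nonneg (by linarith) hhi0)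
    rw [hCdef]; linarith
  -- main quantitative estimate
  have key : ∀ x : Fin d → ℝ, 1 ≤ Real.sqrt (x ⬝ᵥ x) →
      |hsgdPhi n d B γ δ ρ A b x / (x ⬝ᵥ x) ^ 2
          - (-c0 * qAux n B γ δ T ((x ⬝ᵥ ((Aᵀ * A) *ᵥ x)) / (x ⬝ᵥ x)) ρ)|
        ≤ C / Real.sqrt (x ⬝ᵥ x) := by
    intro x hx
    obtain ⟨rr, hrrd⟩ : ∃ r : ℝ, r = Real.sqrt (x ⬝ᵥ x) := ⟨_, rfl⟩
    obtain ⟨pp, hppd⟩ : ∃ ppp : ℝ, ppp = x ⬝ᵥ ((Aᵀ * A) *ᵥ x) := ⟨_, rfl⟩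
    obtain ⟨ss, hssd⟩ : ∃ sss : ℝ, sss = x ⬝ᵥ (Aᵀ *ᵥ b) := ⟨_, rfl⟩
    rw [← hrrd] at hx ⊢
    rw [← hppd]
    have hr0 : 0 < rr := lt_of_lt_of_le one_pos hx
    have hr2 : rr ^ 2 = x ⬝ᵥ x := by rw [hrrd]; exact Real.sq_sqrt (dot_self_nonneg x)
    have hr2pos : 0 < x ⬝ᵥ x := by nlinarith only [hx, hr2]
    obtain ⟨hqlo, hqhi⟩ := hquad x
    rw [← hppd] at hqlo hqhi
    have h01 : (0:ℝ) ≤ 2*γ/(n:ℝ) := div_nonneg (by linarith) hn'.le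
    have hp0 : 0 ≤ pp := le_trans (mul_nonneg hlo0.le hr2pos.le) hqlo
    have hpbd : pp ≤ hi * rr ^ 2 := by rw [hr2]; exact hqhi
    have hsb' := hsb x
    rw [← hssd, ← hrrd] at hsb'
    have hs1a : ss ≤ K1 * rr := le_of_abs_le hsb'
    have hs1b : -(K1 * rr) ≤ ss := neg_le_of_abs_le hsb'
    have hr23 : rr^2 ≤ rr^3 := by nlinarith only [hx, sq_nonneg rr]
    -- the exact decomposition
    have hEq : hsgdPhi n d B γ δ ρ A b x
        = (x ⬝ᵥ x)^2 * (-c0 * qAux n B γ δ T (pp / (x ⬝ᵥ x)) ρ)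
          + ((-(2*γ/(n:ℝ))*pp - 2*γ*δ*rr^2 + c0*T*pp)
            + (1 + rr^2) * (2*γ/(n:ℝ)*ss - 2*c0*T*ss + c0*T*β)
            + (2-ρ)*c0*(2*ss-β)*pp) := by
      rw [phi_eq, htrace, hc0def, hβdef, hppd, hssd, ← hr2]
      unfold qAux
      have hne : rr ≠ 0 := ne_of_gt hr0
      field_simp
      ring
    have hdiff : hsgdPhi n d B γ δ ρ A b x / (x ⬝ᵥ x) ^ 2
          - (-c0 * qAux n B γ δ T (pp / (x ⬝ᵥ x)) ρ)
        = ((-(2*γ/(n:ℝ))*pp - 2*γ*δ*rr^2 + c0*T*pp)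
            + (1 + rr^2) * (2*γ/(n:ℝ)*ss - 2*c0*T*ss + c0*T*β)
            + (2-ρ)*c0*(2*ss-β)*pp) / (x ⬝ᵥ x) ^ 2 := by
      rw [hEq]
      have hne : (x ⬝ᵥ x) ≠ 0 := ne_of_gt hr2pos
      field_simp
      ring
    -- term bounds
    have hE1 : |(-(2*γ/(n:ℝ))*pp - 2*γ*δ*rr^2 + c0*T*pp)|
        ≤ (2*γ/(n:ℝ)*hi + 2*γ*δ + c0*T*hi) * rr^3 := by
      have ha := mul_nonneg h01 hp0
      have hb := mul_nonneg h01 (sub_nonneg.2 hpbd)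
      have hc := mul_nonneg (mul_nonneg hc0.le hTnn) hp0
      have hdd := mul_nonneg (mul_nonneg hc0.le hTnn) (sub_nonneg.2 hpbd)
      have hf := mul_nonneg (mul_nonneg h01 hhi0) (sub_nonneg.2 hr23)
      have hg := mul_nonneg (mul_nonneg (mul_nonneg (by linarith : (0:ℝ) ≤ 2) hγ.le) hδ)
        (sub_nonneg.2 hr23)
      have hh := mul_nonneg (mul_nonneg (mul_nonneg hc0.le hTnn) hhi0) (sub_nonneg.2 hr23)
      have hg2 : (0:ℝ) ≤ 2*γ*δ*rr^2 :=
        mul_nonneg (mul_nonneg (by linarith) hδ) (sq_nonneg rr)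
      rw [abs_le]
      constructor <;> linarith only [ha, hb, hc, hdd, hf, hg, hg2, hh, hr2]
    have hD2rr : (0:ℝ) ≤ (2*γ/(n:ℝ)*K1 + 2*c0*T*K1 + c0*T*β) * rr := by
      have p4 : (0:ℝ) ≤ 2*γ/(n:ℝ)*K1 := mul_nonneg h01 hK10
      have p5 : (0:ℝ) ≤ 2*c0*T*K1 := mul_nonneg (mul_nonneg (by linarith) hTnn) hK10
      have p6 : (0:ℝ) ≤ c0*T*β := mul_nonneg (mul_nonneg hc0.le hTnn) hβ0
      exact mul_nonneg (by linarith) hr0.le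
    have hY : |2*γ/(n:ℝ)*ss - 2*c0*T*ss + c0*T*β|
        ≤ (2*γ/(n:ℝ)*K1 + 2*c0*T*K1 + c0*T*β) * rr := by
      have hi1 := mul_nonneg h01 (sub_nonneg.2 hs1a)
      have hi2 := mul_nonneg h01 (by linarith : (0:ℝ) ≤ ss + K1*rr)
      have hi3 := mul_nonneg (mul_nonneg (by linarith : (0:ℝ) ≤ 2*c0) hTnn) (sub_nonneg.2 hs1a)
      have hi4 := mul_nonneg (mul_nonneg (by linarith : (0:ℝ) ≤ 2*c0) hTnn)
        (by linarith : (0:ℝ) ≤ ss + K1*rr)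
      have hi5 := mul_nonneg (mul_nonneg (mul_nonneg hc0.le hTnn) hβ0)
        (by linarith : (0:ℝ) ≤ rr - 1)
      have hi6 : (0:ℝ) ≤ c0*T*β := mul_nonneg (mul_nonneg hc0.le hTnn) hβ0
      rw [abs_le]
      constructor <;> linarith only [hi1, hi2, hi3, hi4, hi5, hi6]
    have hE2 : |(1 + rr^2) * (2*γ/(n:ℝ)*ss - 2*c0*T*ss + c0*T*β)|
        ≤ 2*(2*γ/(n:ℝ)*K1 + 2*c0*T*K1 + c0*T*β)*rr^3 := by
      rw [abs_mul, abs_of_nonneg (by positivity : (0:ℝ) ≤ 1 + rr^2)]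
      have h1 := mul_le_mul_of_nonneg_left hY (by positivity : (0:ℝ) ≤ 1 + rr^2)
      have h2 : (1 + rr^2) ≤ 2*rr^2 := by nlinarith only [hx]
      have h3 := mul_le_mul_of_nonneg_right h2 hD2rr
      have heq : 2*rr^2*((2*γ/(n:ℝ)*K1 + 2*c0*T*K1 + c0*T*β) * rr)
          = 2*(2*γ/(n:ℝ)*K1 + 2*c0*T*K1 + c0*T*β)*rr^3 := by ring
      linarith only [h1, h3, heq]
    have hsub : |2*ss - β| ≤ (2*K1+β)*rr := by
      have hj1 := mul_nonneg hβ0 (by linarith : (0:ℝ) ≤ rr + 1)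
      have hj2 := mul_nonneg hβ0 (by linarith : (0:ℝ) ≤ rr - 1)
      rw [abs_le]
      constructor <;> linarith only [hj1, hj2, hs1a, hs1b]
    have hE3 : |(2-ρ)*c0*(2*ss-β)*pp| ≤ (|2 - ρ| * c0 * ((2*K1+β) * hi)) * rr^3 := by
      have habs : |(2-ρ)*c0*(2*ss-β)*pp| = |2-ρ| * c0 * (|2*ss-β| * pp) := by
        rw [abs_mul, abs_mul, abs_mul, abs_of_nonneg hc0.le, abs_of_nonneg hp0]
        ring
      rw [habs]
      have h1 : |2*ss-β| * pp ≤ ((2*K1+β)*rr) * (hi * rr^2) :=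
        mul_le_mul hsub hpbd hp0 (mul_nonneg (by linarith) hr0.le)
      have h2 := mul_le_mul_of_nonneg_left h1
        (mul_nonneg (abs_nonneg (2-ρ)) hc0.le)
      calc |2-ρ| * c0 * (|2*ss-β| * pp)
          ≤ |2-ρ| * c0 * ((2*K1+β)*rr * (hi * rr^2)) := h2
        _ = (|2 - ρ| * c0 * ((2*K1+β) * hi)) * rr^3 := by ring
    -- combine
    have htri : |(-(2*γ/(n:ℝ))*pp - 2*γ*δ*rr^2 + c0*T*pp)
            + (1 + rr^2) * (2*γ/(n:ℝ)*ss - 2*c0*T*ss + c0*T*β)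
            + (2-ρ)*c0*(2*ss-β)*pp|
        ≤ C * rr^3 := by
      have t1 := abs_add_le ((-(2*γ/(n:ℝ))*pp - 2*γ*δ*rr^2 + c0*T*pp)
          + (1 + rr^2) * (2*γ/(n:ℝ)*ss - 2*c0*T*ss + c0*T*β)) ((2-ρ)*c0*(2*ss-β)*pp)
      have t2 := abs_add_le (-(2*γ/(n:ℝ))*pp - 2*γ*δ*rr^2 + c0*T*pp)
          ((1 + rr^2) * (2*γ/(n:ℝ)*ss - 2*c0*T*ss + c0*T*β))
      have hCr : C * rr^3 = (2*γ/(n:ℝ)*hi + 2*γ*δ + c0*T*hi) * rr^3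
          + 2*(2*γ/(n:ℝ)*K1 + 2*c0*T*K1 + c0*T*β)*rr^3
          + (|2 - ρ| * c0 * ((2*K1+β) * hi)) * rr^3 := by
        rw [hCdef]; ring
      linarith only [t1, t2, hCr, hE1, hE2, hE3]
    rw [hdiff, abs_div, abs_of_nonneg (by positivity : (0:ℝ) ≤ (x ⬝ᵥ x)^2)]
    have hx4 : (x ⬝ᵥ x)^2 = rr^4 := by rw [← hr2]; ring
    rw [hx4, div_le_div_iff₀ (by positivity) hr0]
    calc |(-(2*γ/(n:ℝ))*pp - 2*γ*δ*rr^2 + c0*T*pp)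
            + (1 + rr^2) * (2*γ/(n:ℝ)*ss - 2*c0*T*ss + c0*T*β)
            + (2-ρ)*c0*(2*ss-β)*pp| * rr
        ≤ (C * rr^3) * rr := mul_le_mul_of_nonneg_right htri hr0.le
      _ = C * rr^4 := by ring
  -- membership of the Rayleigh quotient
  have hmem : ∀ x : Fin d → ℝ, 0 < x ⬝ᵥ x →
      (x ⬝ᵥ ((Aᵀ * A) *ᵥ x)) / (x ⬝ᵥ x) ∈ Set.Icc lo hi := by
    intro x hx
    obtain ⟨h1, h2⟩ := hquad x
    exact ⟨(le_div_iff₀ hx).2 (by linarith), (div_le_iff₀ hx).2 (by linarith)⟩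
  have hev1 : ∀ᶠ x : Fin d → ℝ in L, 1 ≤ Real.sqrt (x ⬝ᵥ x) :=
    tendsto_comap.eventually_ge_atTop 1
  have hxx_pos : ∀ x : Fin d → ℝ, 1 ≤ Real.sqrt (x ⬝ᵥ x) → 0 < x ⬝ᵥ x := by
    intro x hx
    have h := Real.sq_sqrt (dot_self_nonneg x)
    nlinarith only [hx, h]
  -- eventual upper/lower bounds
  have hub : ∀ᶠ x : Fin d → ℝ in L,
      hsgdPhi n d B γ δ ρ A b x / (x ⬝ᵥ x) ^ 2 ≤ S + C / Real.sqrt (x ⬝ᵥ x) := by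
    filter_upwards [hev1] with x hx
    have hk := key x hx
    have hmem' := hmem x (hxx_pos x hx)
    have hq1 : qAux n B γ δ T mstar ρ ≤ qAux n B γ δ T ((x ⬝ᵥ ((Aᵀ * A) *ᵥ x)) / (x ⬝ᵥ x)) ρ :=
      hmin _ hmem'
    have := abs_le.1 hk
    have hS := mul_le_mul_of_nonneg_left hq1 hc0.le
    rw [hSdef]
    linarith only [this.2, hS]
  have hlb : ∀ᶠ x : Fin d → ℝ in L,
      -c0 * qAux n B γ δ T mmax ρ - C ≤ hsgdPhi n d B γ δ ρ A b x / (x ⬝ᵥ x) ^ 2 := by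
    filter_upwards [hev1] with x hx
    have hk := key x hx
    have hmem' := hmem x (hxx_pos x hx)
    have hq1 : qAux n B γ δ T ((x ⬝ᵥ ((Aᵀ * A) *ᵥ x)) / (x ⬝ᵥ x)) ρ ≤ qAux n B γ δ T mmax ρ :=
      hmax _ hmem'
    have h2 := (abs_le.1 hk).1
    have hCr : C / Real.sqrt (x ⬝ᵥ x) ≤ C := div_le_self hC0 hx
    have hS := mul_le_mul_of_nonneg_left hq1 hc0.le
    linarith only [h2, hCr, hS]
  -- the ray achieving the max
  obtain ⟨u, huu, hup⟩ : ∃ u : Fin d → ℝ, u ⬝ᵥ u = 1 ∧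
      u ⬝ᵥ ((Aᵀ * A) *ᵥ u) = mstar := by
    have := exists_unit Q hQ1 hQ2 (fun i => lam i ^ 2) i0 i1 mstar hmstar
    rwa [← hM] at this
  have hray_dot : ∀ t : ℝ, (t • u) ⬝ᵥ (t • u) = t ^ 2 := by
    intro t
    rw [smul_dotProduct, dotProduct_smul, smul_eq_mul, smul_eq_mul, huu]
    ring
  have hray_p : ∀ t : ℝ, (t • u) ⬝ᵥ ((Aᵀ * A) *ᵥ (t • u)) = t ^ 2 * mstar := by
    intro t
    rw [Matrix.mulVec_smul, smul_dotProduct, dotProduct_smul,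
      smul_eq_mul, smul_eq_mul, hup]
    ring
  have hmapL : Tendsto (fun t : ℝ => t • u) atTop L := by
    rw [hL, tendsto_comap_iff]
    have : (fun t : ℝ => Real.sqrt ((t • u) ⬝ᵥ (t • u))) = fun t : ℝ => |t| := by
      funext t; rw [hray_dot t, Real.sqrt_sq_eq_abs]
    show Tendsto (fun t : ℝ => Real.sqrt ((t • u) ⬝ᵥ (t • u))) atTop atTop
    rw [this]
    exact tendsto_abs_atTop_atTop
  haveI : L.NeBot := hmapL.neBot
  have hrayS : Tendsto (fun t : ℝ => hsgdPhi n d B γ δ ρ A b (t • u) / ((t • u) ⬝ᵥ (t • u)) ^ 2)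
      atTop (nhds S) := by
    have hdiff0 : Tendsto (fun t : ℝ =>
        hsgdPhi n d B γ δ ρ A b (t • u) / ((t • u) ⬝ᵥ (t • u)) ^ 2 - S) atTop (nhds 0) := by
      apply squeeze_zero_norm' (a := fun t : ℝ => C / t)
      · filter_upwards [eventually_ge_atTop (1:ℝ)] with t ht
        have hsq : Real.sqrt ((t • u) ⬝ᵥ (t • u)) = t := by
          rw [hray_dot t, Real.sqrt_sq (by linarith)]
        have h1 : (1:ℝ) ≤ Real.sqrt ((t • u) ⬝ᵥ (t • u)) := by rw [hsq]; exact ht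
        have hk := key (t • u) h1
        have harg : ((t • u) ⬝ᵥ ((Aᵀ * A) *ᵥ (t • u))) / ((t • u) ⬝ᵥ (t • u)) = mstar := by
          rw [hray_p t, hray_dot t]
          field_simp
        rw [harg, hsq] at hk
        simpa [Real.norm_eq_abs, hSdef] using hk
      · exact tendsto_const_nhds.div_atTop tendsto_id
    have := hdiff0.add (tendsto_const_nhds (x := S))
    simpa using this
  apply le_antisymm
  · -- limsup ≤ S
    have hbd2 : IsBoundedUnder (· ≤ ·) L (fun x : Fin d → ℝ => S + C / Real.sqrt (x ⬝ᵥ x)) := by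
      apply Filter.Tendsto.isBoundedUnder_le (a := S + 0)
      exact tendsto_const_nhds.add (tendsto_const_nhds.div_atTop tendsto_comap)
    have hcb : IsCoboundedUnder (· ≤ ·) L
        (fun x : Fin d → ℝ => hsgdPhi n d B γ δ ρ A b x / (x ⬝ᵥ x) ^ 2) :=
      isCoboundedUnder_le_of_eventually_le L hlb
    have h1 : limsup (fun x : Fin d → ℝ => hsgdPhi n d B γ δ ρ A b x / (x ⬝ᵥ x) ^ 2) L
        ≤ limsup (fun x : Fin d → ℝ => S + C / Real.sqrt (x ⬝ᵥ x)) L :=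
      limsup_le_limsup hub hcb hbd2
    have h2 : limsup (fun x : Fin d → ℝ => S + C / Real.sqrt (x ⬝ᵥ x)) L = S := by
      have ht : Tendsto (fun x : Fin d → ℝ => S + C / Real.sqrt (x ⬝ᵥ x)) L (nhds S) := by
        have := tendsto_const_nhds (x := S) (f := L) |>.add
          ((tendsto_const_nhds (x := C) (f := L)).div_atTop tendsto_comap)
        simpa using this
      exact ht.limsup_eq
    linarith
  · -- S ≤ limsup
    have hbd : IsBoundedUnder (· ≤ ·) L
        (fun x : Fin d → ℝ => hsgdPhi n d B γ δ ρ A b x / (x ⬝ᵥ x) ^ 2) := by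
      refine ⟨S + C, ?_⟩
      rw [eventually_map]
      filter_upwards [hub, hev1] with x hx h1
      have : C / Real.sqrt (x ⬝ᵥ x) ≤ C := div_le_self hC0 h1
      linarith
    apply le_of_forall_pos_le_add
    intro ε hε
    have hfreq : ∃ᶠ x : Fin d → ℝ in L,
        S - ε ≤ hsgdPhi n d B γ δ ρ A b x / (x ⬝ᵥ x) ^ 2 := by
      have hev : ∀ᶠ t : ℝ in atTop,
          S - ε ≤ hsgdPhi n d B γ δ ρ A b (t • u) / ((t • u) ⬝ᵥ (t • u)) ^ 2 :=
        hrayS.eventually (eventually_ge_nhds (by linarith))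
      have : ∃ᶠ x : Fin d → ℝ in map (fun t : ℝ => t • u) atTop,
          S - ε ≤ hsgdPhi n d B γ δ ρ A b x / (x ⬝ᵥ x) ^ 2 := by
        rw [frequently_map]
        exact hev.frequently
      exact this.filter_mono hmapL
    have := le_limsup_of_frequently_le hfreq hbd
    linarith
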